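/- The vector field W₇ = z₂^{m−1}∂ₓ + ((m−1)/(2m−1))z₂^{2m−1}∂_y + (z₁z₂^{m−1} − y/m)∂_z + (1 − 1/m)z₂^m ∂_{z₁} (for m ≠ 0, 1/2) is a symmetry of the rank-2 distribution Δ = span{D, ∂_{z₂}} on ℝ⁵(x,y,z,z₁,z₂), where D = ∂ₓ + z₁∂_z + z₂∂_{z₁} + z₂^m ∂_y; i.e., the Lie brackets [W₇, D] and [W₇, ∂_{z₂}] lie in Δ at every point where z₂ > 0. -/

import Mathlib

/-- The Lie bracket `[V,W](x) = DW(x)·V(x) − DV(x)·W(x)` of vector fields on `ℝ⁵`. -/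
noncomputable def vBracket (V W : (Fin 5 → ℝ) → (Fin 5 → ℝ)) (x : Fin 5 → ℝ) : Fin 5 → ℝ :=
  fderiv ℝ W x (V x) - fderiv ℝ V x (W x)

/-- The total derivative field `D = ∂ₓ + z₁∂_z + z₂∂_{z₁} + z₂^m ∂_y` encoding the
Monge equation `y' = (z'')^m` on `ℝ⁵(x,y,z,z₁,z₂)` (coordinates indexed `0,…,4`). -/
noncomputable def mongeD (m : ℝ) (p : Fin 5 → ℝ) : Fin 5 → ℝ :=
  ![1, (p 4) ^ m, p 3, p 4, 0]

/-- The vector field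
`W₇ = z₂^{m−1}∂ₓ + ((m−1)/(2m−1))z₂^{2m−1}∂_y + (z₁z₂^{m−1} − y/m)∂_z + (1−1/m)z₂^m ∂_{z₁}`. -/
noncomputable def mongeW7 (m : ℝ) (p : Fin 5 → ℝ) : Fin 5 → ℝ :=
  ![(p 4) ^ (m - 1),
    ((m - 1) / (2*m - 1)) * (p 4) ^ (2*m - 1),
    p 3 * (p 4) ^ (m - 1) - p 1 / m,
    (1 - 1/m) * (p 4) ^ m,
    0]

open ContinuousLinearMap in
/-- For `m ≠ 0, 1/2`, the vector field `W₇` is an infinitesimal symmetry of the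
rank 2 distribution `Δ = span{D, ∂_{z₂}}` on `ℝ⁵(x,y,z,z₁,z₂)` encoding the Monge
equation `y' = (z'')^m`: at every point with `z₂ > 0` the brackets `[W₇, D]` and
`[W₇, ∂_{z₂}]` lie in `Δ`. -/
theorem mongeW7_is_symmetry (m : ℝ) (h0 : m ≠ 0) (h12 : m ≠ 1/2)
    (p : Fin 5 → ℝ) (hp : 0 < p 4) :
    vBracket (mongeW7 m) (mongeD m) p
        ∈ Submodule.span ℝ {mongeD m p, (Pi.single 4 1 : Fin 5 → ℝ)} ∧
    vBracket (mongeW7 m) (fun _ => (Pi.single 4 1 : Fin 5 → ℝ)) p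
        ∈ Submodule.span ℝ {mongeD m p, (Pi.single 4 1 : Fin 5 → ℝ)} := by
  have h4 : p 4 ≠ 0 := hp.ne'
  have h2m : 2*m - 1 ≠ 0 := by
    intro h; apply h12; linarith [h]
  set pr : Fin 5 → (Fin 5 → ℝ) →L[ℝ] ℝ := fun i => ContinuousLinearMap.proj i with hpr
  have hproj : ∀ i : Fin 5, HasFDerivAt (fun x : Fin 5 → ℝ => x i) (pr i) p := fun i =>
    hasFDerivAt_apply i p
  set LD : (Fin 5 → ℝ) →L[ℝ] (Fin 5 → ℝ) :=
    ContinuousLinearMap.pi ![0, (m * p 4 ^ (m - 1)) • pr 4, pr 3, pr 4, 0] with hLD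
  have hD : HasFDerivAt (mongeD m) LD p := by
    rw [hasFDerivAt_pi']
    intro i
    fin_cases i <;>
      simp only [mongeD, hLD, proj_pi, Matrix.cons_val_zero, Matrix.cons_val_one, Matrix.head_cons,
        Matrix.cons_val_two, Matrix.tail_cons, Matrix.cons_val_three, Matrix.cons_val_four,
        Fin.isValue]
    · exact hasFDerivAt_const _ _
    · exact (hproj 4).rpow_const (Or.inl h4)
    · exact hproj 3
    · exact hproj 4
    · exact hasFDerivAt_const _ _
  set LW : (Fin 5 → ℝ) →L[ℝ] (Fin 5 → ℝ) :=
    ContinuousLinearMap.pi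
      ![((m - 1) * p 4 ^ (m - 1 - 1)) • pr 4,
        ((m - 1) / (2*m - 1)) • (((2*m - 1) * p 4 ^ (2*m - 1 - 1)) • pr 4),
        (p 3 • (((m - 1) * p 4 ^ (m - 1 - 1)) • pr 4) + p 4 ^ (m - 1) • pr 3)
          - m⁻¹ • pr 1,
        (1 - 1/m) • ((m * p 4 ^ (m - 1)) • pr 4),
        0] with hLW
  have hW : HasFDerivAt (mongeW7 m) LW p := by
    rw [hasFDerivAt_pi']
    intro i
    fin_cases i <;>
      simp only [mongeW7, hLW, proj_pi, Matrix.cons_val_zero, Matrix.cons_val_one,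
        Matrix.head_cons, Matrix.cons_val_two, Matrix.tail_cons, Matrix.cons_val_three,
        Matrix.cons_val_four, Fin.isValue]
    · exact (hproj 4).rpow_const (Or.inl h4)
    · exact ((hproj 4).rpow_const (Or.inl h4)).const_mul _
    · have : HasFDerivAt (fun x : Fin 5 → ℝ => x 1 / m) (m⁻¹ • pr 1) p := by
        simp only [div_eq_inv_mul]
        exact (hproj 1).const_mul _
      exact (((hproj 3).mul ((hproj 4).rpow_const (Or.inl h4)))).sub this
    · exact ((hproj 4).rpow_const (Or.inl h4)).const_mul _
    · exact hasFDerivAt_const _ _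
  have eA : p 4 ^ (m - 1 - 1) * p 4 = p 4 ^ (m - 1) := by
    rw [← Real.rpow_add_one h4, sub_add_cancel]
  have eB : p 4 ^ (m - 1) * p 4 = p 4 ^ m := by
    rw [← Real.rpow_add_one h4, sub_add_cancel]
  have eC : p 4 ^ (m - 1 - 1) * p 4 ^ m = p 4 ^ (2 * m - 1 - 1) := by
    rw [← Real.rpow_add hp]; ring_nf
  constructor
  · have e1 : vBracket (mongeW7 m) (mongeD m) p = 0 := by
      unfold vBracket
      rw [hD.fderiv, hW.fderiv]
      funext i
      fin_cases i <;>
        simp [hLD, hLW, hpr, mongeD, mongeW7, ContinuousLinearMap.pi_apply,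
          ContinuousLinearMap.proj_apply] <;>
      field_simp <;> linear_combination (-m : ℝ) * eB
    rw [e1]; exact zero_mem _
  · have e2 : vBracket (mongeW7 m) (fun _ => (Pi.single 4 1 : Fin 5 → ℝ)) p
        = ((1 - m) * p 4 ^ (m - 1 - 1)) • mongeD m p := by
      unfold vBracket
      rw [fderiv_const_apply, hW.fderiv]
      funext i
      fin_cases i <;>
        simp [hLD, hLW, hpr, mongeD, mongeW7, ContinuousLinearMap.pi_apply,
          ContinuousLinearMap.proj_apply]
      · ring
      · field_simp
        rw [show m * 2 = 2 * m by ring, mul_right_comm, mul_div_cancel_right₀ _ h2m]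
        linear_combination (m - 1 : ℝ) * eC
      · ring
      · field_simp
        linear_combination (m - 1 : ℝ) * eA
    rw [e2]
    exact Submodule.smul_mem _ _ (Submodule.subset_span (Set.mem_insert _ _))
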